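/- Let H be a complex Hilbert space, 0<q<1 and r ≥ 0. Suppose v is a unitary operator on H, Y is a bounded self-adjoint operator on H with trivial kernel satisfying Y·v = q²·v·Y, and T is a bounded nonnegative self-adjoint operator satisfying T = q²·v·T·v* + (1−q²)·(Y² + r·1). Then H = {0}. -/

import Mathlib

open ContinuousLinearMap Filter

theorem stmt_8 {H : Type*} [NormedAddCommGroup H] [InnerProductSpace ℂ H] [CompleteSpace H]
    (q r : ℝ) (hq : 0 < q) (hq1 : q < 1) (hr : 0 ≤ r)
    (v Y T : H →L[ℂ] H)
    (hv1 : ContinuousLinearMap.adjoint v * v = 1)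
    (hv2 : v * ContinuousLinearMap.adjoint v = 1)
    (hY : IsSelfAdjoint Y)
    (hYker : ∀ ξ : H, Y ξ = 0 → ξ = 0)
    (hYv : Y * v = ((q : ℂ) ^ 2) • (v * Y))
    (hTpos : T.IsPositive)
    (hT : T = ((q : ℂ) ^ 2) • (v * T * ContinuousLinearMap.adjoint v)
        + (1 - (q : ℂ) ^ 2) • (Y ^ 2 + (r : ℂ) • (1 : H →L[ℂ] H))) :
    ∀ ξ : H, ξ = 0 := by
  set w := ContinuousLinearMap.adjoint v with hw
  -- w* = v
  have hwadj : ContinuousLinearMap.adjoint w = v := adjoint_adjoint v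
  -- w is an isometry
  have hwiso : ∀ η : H, ‖w η‖ = ‖η‖ := by
    intro η
    have : w η = w η := rfl
    have h := congrArg (fun A : H →L[ℂ] H => A η) hv2
    simp only [mul_apply_eq_comp, one_apply_eq_self] at h
    have : ‖w η‖ ^ 2 = ‖η‖ ^ 2 := by
      rw [← inner_self_eq_norm_sq (𝕜 := ℂ), ← inner_self_eq_norm_sq (𝕜 := ℂ) (x := η)]
      rw [← adjoint_inner_left w, hwadj, h]
    nlinarith [norm_nonneg (w η), norm_nonneg η]
  -- w Y = q² Y w
  have hwY : ∀ ξ : H, w (Y ξ) = ((q:ℂ)^2) • Y (w ξ) := by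
    intro ξ
    have h1 : w * (Y * v) * w = w * (((q : ℂ) ^ 2) • (v * Y)) * w := by rw [hYv]
    have h2 : w * Y = ((q:ℂ)^2) • (Y * w) := by
      calc w * Y = w * Y * (v * w) := by rw [hv2, mul_one]
        _ = w * (Y * v) * w := by noncomm_ring
        _ = w * (((q : ℂ) ^ 2) • (v * Y)) * w := by rw [hYv]
        _ = ((q:ℂ)^2) • (w * v * (Y * w)) := by
            simp only [mul_smul_comm, smul_mul_assoc, mul_assoc]
        _ = ((q:ℂ)^2) • (Y * w) := by rw [hv1, one_mul]
    have := congrArg (fun A : H →L[ℂ] H => A ξ) h2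
    simpa [mul_apply_eq_comp] using this
  -- norm relation: ‖Y ξ‖ = q^2 * ‖Y (w ξ)‖
  have hnorm : ∀ ξ : H, ‖Y ξ‖ = q^2 * ‖Y (w ξ)‖ := by
    intro ξ
    calc ‖Y ξ‖ = ‖w (Y ξ)‖ := (hwiso _).symm
      _ = ‖((q:ℂ)^2) • Y (w ξ)‖ := by rw [hwY]
      _ = q^2 * ‖Y (w ξ)‖ := by
          rw [norm_smul]
          congr 1
          simp [abs_of_nonneg (sq_nonneg q)]
  -- key identity for the quadratic form
  have key : ∀ ξ : H, RCLike.re (inner ℂ (T ξ) ξ : ℂ) =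
      q^2 * RCLike.re (inner ℂ (T (w ξ)) (w ξ) : ℂ)
      + (1 - q^2) * (‖Y ξ‖^2 + r * ‖ξ‖^2) := by
    intro ξ
    conv_lhs => rw [hT]
    have hv' : inner ℂ ((v * T * w) ξ) ξ = (inner ℂ (T (w ξ)) (w ξ) : ℂ) := by
      simp only [mul_apply_eq_comp]
      conv_lhs => rw [← hwadj, adjoint_inner_left]
    have hY2 : inner ℂ ((Y^2) ξ) ξ = ((‖Y ξ‖^2 : ℝ) : ℂ) := by
      have : (Y^2) ξ = Y (Y ξ) := by simp [pow_two, mul_apply_eq_comp]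
      rw [this, ← hY.adjoint_eq, adjoint_inner_left, hY.adjoint_eq,
        inner_self_eq_norm_sq_to_K]
      norm_cast
    have hξ : (inner ℂ ξ ξ : ℂ) = ((‖ξ‖^2 : ℝ) : ℂ) := by
      rw [inner_self_eq_norm_sq_to_K]; norm_cast
    simp only [add_apply, smul_apply, inner_add_left, inner_smul_left, hv', hY2,
      one_apply_eq_self, inner_smul_left, hξ]
    simp only [RCLike.re_to_complex, ← Complex.ofReal_pow, ← Complex.ofReal_one,
      ← Complex.ofReal_sub, Complex.conj_ofReal, Complex.add_re, Complex.mul_re,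
      Complex.ofReal_re, Complex.ofReal_im, Complex.add_im, Complex.mul_im]
    ring
  -- main inequality by induction
  have main : ∀ n : ℕ, ∀ ξ : H,
      (1 - q^2) * ‖Y ξ‖^2 ≤ (q^2)^n * RCLike.re (inner ℂ (T ξ) ξ : ℂ) := by
    intro n
    induction n with
    | zero =>
      intro ξ
      rw [key ξ]
      have h1 : 0 ≤ RCLike.re (inner ℂ (T (w ξ)) (w ξ) : ℂ) := hTpos.re_inner_nonneg_left _
      have h2 : 0 ≤ r * ‖ξ‖^2 := by positivity
      have h3 : (0:ℝ) < 1 - q^2 := by nlinarith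
      nlinarith [mul_nonneg (sq_nonneg q) h1, mul_nonneg h3.le h2]
    | succ n ih =>
      intro ξ
      have h1 : (1 - q^2) * ‖Y (w ξ)‖^2 ≤ (q^2)^n * RCLike.re (inner ℂ (T (w ξ)) (w ξ) : ℂ) :=
        ih (w ξ)
      have h2 : q^2 * RCLike.re (inner ℂ (T (w ξ)) (w ξ) : ℂ) ≤ RCLike.re (inner ℂ (T ξ) ξ : ℂ) := by
        rw [key ξ]
        have h0 : 0 ≤ ‖Y ξ‖^2 + r * ‖ξ‖^2 := by positivity
        have h3 : (0:ℝ) < 1 - q^2 := by nlinarith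
        nlinarith [mul_nonneg h3.le h0]
      have h3 : ‖Y ξ‖^2 = (q^2)^2 * ‖Y (w ξ)‖^2 := by rw [hnorm ξ]; ring
      calc (1 - q^2) * ‖Y ξ‖^2 = (q^2)^2 * ((1 - q^2) * ‖Y (w ξ)‖^2) := by rw [h3]; ring
        _ ≤ (q^2)^2 * ((q^2)^n * RCLike.re (inner ℂ (T (w ξ)) (w ξ) : ℂ)) := by
            apply mul_le_mul_of_nonneg_left h1 (by positivity)
        _ = (q^2)^(n+1) * (q^2 * RCLike.re (inner ℂ (T (w ξ)) (w ξ) : ℂ)) := by ring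
        _ ≤ (q^2)^(n+1) * RCLike.re (inner ℂ (T ξ) ξ : ℂ) := by
            apply mul_le_mul_of_nonneg_left h2 (by positivity)
  intro ξ
  have hq2 : (0:ℝ) ≤ q^2 := sq_nonneg q
  have hq2' : q^2 < 1 := by nlinarith
  have hlim : Tendsto (fun n : ℕ => (q^2)^n * RCLike.re (inner ℂ (T ξ) ξ : ℂ)) atTop
      (nhds (0 * RCLike.re (inner ℂ (T ξ) ξ : ℂ))) :=
    (tendsto_pow_atTop_nhds_zero_of_lt_one hq2 hq2').mul_const _
  rw [zero_mul] at hlim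
  have hle : (1 - q^2) * ‖Y ξ‖^2 ≤ 0 := ge_of_tendsto' hlim (fun n => main n ξ)
  have : ‖Y ξ‖^2 ≤ 0 := by nlinarith
  have : Y ξ = 0 := by
    have := le_antisymm this (by positivity)
    simpa [pow_eq_zero_iff] using this
  exact hYker ξ this
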